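/- Fix τ with 0 < τ ≤ 1/2 and define Λ_τ(s) := (1−τ)^s·(2ζ(s,1) − ζ(s,2−τ) − ζ(s,1+τ)) for real s ≥ 3, where ζ(s,x) := ∑_{k=0}^{∞} (x+k)^{−s} is the Hurwitz zeta function. Then Λ_τ(s) > 0 for all s ∈ [3,∞), Λ_τ is strictly decreasing on [3,∞) (i.e. 3 ≤ s₁ < s₂ implies Λ_τ(s₂) < Λ_τ(s₁)), and Λ_τ(s) → 0 as s → +∞. -/

import Mathlib

open Set Filter Real

/-- The Hurwitz zeta function `ζ(s,x) = ∑_{k≥0} (x+k)^{-s}` for real `s` and `x > 0`. -/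
noncomputable def hurwitzZ (s x : ℝ) : ℝ := ∑' k : ℕ, ((x + (k : ℝ)) ^ s)⁻¹

/-- `Λ_τ(s) = (1-τ)^s (2ζ(s,1) - ζ(s,2-τ) - ζ(s,1+τ))`. -/
noncomputable def LamH (τ s : ℝ) : ℝ :=
  (1 - τ) ^ s * (2 * hurwitzZ s 1 - hurwitzZ s (2 - τ) - hurwitzZ s (1 + τ))

/-- summability of `k ↦ ((c+k)^p)⁻¹` for `c ≥ 1`, `p ≥ 2`. -/
lemma summable_invpow {c p : ℝ} (hc : 1 ≤ c) (hp : 2 ≤ p) :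
    Summable (fun k : ℕ => ((c + (k : ℝ)) ^ p)⁻¹) := by
  have base : Summable (fun k : ℕ => (((k : ℝ) + 1) ^ (2:ℝ))⁻¹) := by
    have h := Real.summable_nat_rpow_inv.mpr (by norm_num : (1:ℝ) < 2)
    have := (summable_nat_add_iff (f := fun n : ℕ => (((n:ℝ)) ^ (2:ℝ))⁻¹) 1).mpr h
    refine this.congr fun k => ?_
    push_cast; ring_nf
  refine Summable.of_nonneg_of_le (fun k => ?_) (fun k => ?_) base
  · positivity
  · have h1 : (0:ℝ) < (k:ℝ) + 1 := by positivity
    have h2 : ((k:ℝ) + 1) ≤ c + k := by linarith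
    have h3 : ((k:ℝ) + 1) ^ (2:ℝ) ≤ (c + k) ^ p := by
      calc ((k:ℝ) + 1) ^ (2:ℝ) ≤ ((k:ℝ) + 1) ^ p :=
            Real.rpow_le_rpow_of_exponent_le (by linarith) hp
        _ ≤ (c + k) ^ p := Real.rpow_le_rpow (by positivity) h2 (by linarith)
    exact inv_anti₀ (by positivity) h3

lemma hasSum_telescope7 : HasSum (fun k : ℕ => ((((k:ℝ) + 7) * ((k:ℝ) + 8)))⁻¹) (7:ℝ)⁻¹ := by
  have key : ∀ k : ℕ, ((((k:ℝ) + 7) * ((k:ℝ) + 8)))⁻¹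
      = ((k:ℝ) + 7)⁻¹ - (((k+1:ℕ):ℝ) + 7)⁻¹ := by
    intro k
    have h1 : ((k:ℝ) + 7) ≠ 0 := by positivity
    have h2 : ((k:ℝ) + 8) ≠ 0 := by positivity
    push_cast
    rw [show ((k:ℝ) + 1 + 7) = (k:ℝ) + 8 by ring, inv_sub_inv h1 h2]
    rw [show ((k:ℝ) + 8 - ((k:ℝ)+7)) = 1 by ring, one_div]
  rw [show (fun k : ℕ => ((((k:ℝ) + 7) * ((k:ℝ) + 8)))⁻¹)
      = fun k : ℕ => (((k:ℝ) + 7)⁻¹ - (((k+1:ℕ):ℝ) + 7)⁻¹) from funext key]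
  have hnn : ∀ k : ℕ, 0 ≤ ((k:ℝ) + 7)⁻¹ - (((k+1:ℕ):ℝ) + 7)⁻¹ := by
    intro k
    have h1 : (0:ℝ) < (k:ℝ) + 7 := by positivity
    have : (((k+1:ℕ):ℝ) + 7)⁻¹ ≤ ((k:ℝ) + 7)⁻¹ := by
      apply inv_anti₀ h1; push_cast; linarith
    linarith
  rw [hasSum_iff_tendsto_nat_of_nonneg hnn]
  have hsum : ∀ n : ℕ, ∑ i ∈ Finset.range n, (((i:ℝ) + 7)⁻¹ - (((i+1:ℕ):ℝ) + 7)⁻¹)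
      = (7:ℝ)⁻¹ - ((n:ℝ) + 7)⁻¹ := by
    intro n
    have := Finset.sum_range_sub' (f := fun i : ℕ => ((i:ℝ) + 7)⁻¹) n
    simpa using this
  simp only [hsum]
  have h2 : Tendsto (fun n : ℕ => ((n:ℝ) + 7)⁻¹) atTop (nhds 0) := by
    apply Tendsto.inv_tendsto_atTop
    exact tendsto_atTop_add_const_right atTop 7 tendsto_natCast_atTop_atTop
  simpa using (tendsto_const_nhds (x := (7:ℝ)⁻¹)).sub h2

lemma exp_cubic_lb {x : ℝ} (hx : 0 ≤ x) : 1 + x + x^2/2 + x^3/6 ≤ Real.exp x := by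
  have h := Real.sum_le_exp_of_nonneg hx 4
  have he : ∑ i ∈ Finset.range 4, x ^ i / (Nat.factorial i) = 1 + x + x^2/2 + x^3/6 := by
    norm_num [Finset.sum_range_succ, Nat.factorial]
  linarith [he ▸ h]

lemma exp_neg_cubic_lb {x : ℝ} (hx : 0 ≤ x) : 1 - x + x^2/2 - x^3/6 ≤ Real.exp (-x) := by
  set p : ℝ → ℝ := fun t => 1 - t + t^2/2 - t^3/6 with hp
  have hderiv : ∀ t : ℝ, HasDerivAt (fun t => Real.exp t * p t) (Real.exp t * (-(t^3)/6)) t := by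
    intro t
    have h1 : HasDerivAt p (-1 + t - t^2/2) t := by
      simp only [hp]
      have : HasDerivAt (fun t : ℝ => 1 - t + t^2/2 - t^3/6)
          (0 - 1 + (2*t^1)/2 - (3*t^2)/6) t := by
        exact (((hasDerivAt_const t (1:ℝ)).sub (hasDerivAt_id t)).add
          ((hasDerivAt_pow 2 t).div_const 2)).sub ((hasDerivAt_pow 3 t).div_const 6)
      convert this using 1; ring
    have h2 := (Real.hasDerivAt_exp t).mul h1
    refine h2.congr_deriv ?_
    simp only [hp]; ring
  have hmono : AntitoneOn (fun t => Real.exp t * p t) (Icc 0 x) := by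
    apply antitoneOn_of_deriv_nonpos (convex_Icc 0 x)
    · exact Continuous.continuousOn (by fun_prop)
    · intro t _
      exact (hderiv t).differentiableAt.differentiableWithinAt
    · intro t ht
      rw [(hderiv t).deriv]
      have ht0 : 0 ≤ t := le_of_lt (by simpa using (mem_Ioo.mp (by simpa using ht)).1)
      have h3 : 0 ≤ t^3 := by positivity
      have he : 0 < Real.exp t := Real.exp_pos t
      nlinarith
  have h0 : Real.exp x * p x ≤ Real.exp 0 * p 0 :=
    hmono ⟨le_rfl, hx⟩ ⟨hx, le_rfl⟩ hx
  have hp0 : Real.exp 0 * p 0 = 1 := by simp [hp]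
  rw [hp0] at h0
  have h4 := mul_le_mul_of_nonneg_left h0 (Real.exp_pos (-x)).le
  rw [← mul_assoc, ← Real.exp_add, neg_add_cancel, Real.exp_zero, one_mul, mul_one] at h4
  exact h4

lemma log_three_half : (0.4:ℝ) ≤ Real.log (3/2) := by
  rw [Real.le_log_iff_exp_le (by norm_num)]
  have hb := Real.exp_bound (x := 0.4) (by rw [abs_of_nonneg] <;> norm_num) (n := 4) (by norm_num)
  have hs : ∑ m ∈ Finset.range 4, (0.4:ℝ) ^ m / (Nat.factorial m) = 559/375 := by
    norm_num [Finset.sum_range_succ, Nat.factorial]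
  rw [hs] at hb
  have h2 := (abs_le.mp hb).2
  have h3 : |(0.4:ℝ)| ^ 4 * ((Nat.succ 4) / ((Nat.factorial 4) * (4:ℕ))) ≤ 0.0014 := by
    rw [abs_of_nonneg (by norm_num)]
    norm_num [Nat.factorial]
  norm_num at h2 h3 ⊢
  linarith

lemma neg_log_one_sub_ge {τ : ℝ} (h0 : 0 < τ) (h : τ ≤ 1/2) :
    τ + τ^2/2 ≤ -Real.log (1 - τ) := by
  set x := τ + τ^2/2 with hx
  have hx0 : 0 ≤ x := by positivity
  have hcubic := exp_neg_cubic_lb hx0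
  have hpoly : (1:ℝ) - τ ≤ 1 - x + x^2/2 - x^3/6 := by
    rw [hx]
    nlinarith [sq_nonneg τ, pow_pos h0 3, pow_pos h0 4, sq_nonneg (τ^2)]
  have h1τ : (0:ℝ) < 1 - τ := by linarith
  have := (Real.log_le_iff_le_exp h1τ).mpr (le_trans hpoly hcubic)
  linarith

-- convexity ratio lemma
lemma one_sub_rpow_ratio {A B Δ : ℝ} (hA : 1 < A) (hAB : A ≤ B) (hΔ : 0 < Δ) :
    Real.log A * (1 - B ^ (-Δ)) ≤ Real.log B * (1 - A ^ (-Δ)) := by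
  have hA0 : (0:ℝ) < A := by linarith
  have hB0 : (0:ℝ) < B := by linarith
  have hu : 0 < Δ * Real.log A := mul_pos hΔ (Real.log_pos hA)
  have huv : Δ * Real.log A ≤ Δ * Real.log B :=
    mul_le_mul_of_nonneg_left (Real.log_le_log hA0 hAB) hΔ.le
  set u := Δ * Real.log A
  set v := Δ * Real.log B
  have hv : 0 < v := lt_of_lt_of_le hu huv
  -- exp(-u) ≤ (u/v) exp(-v) + (1 - u/v)
  have hconv : Real.exp (-u) ≤ (u/v) * Real.exp (-v) + (1 - u/v) := by
    have hw1 : (0:ℝ) ≤ u/v := by positivity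
    have hw2 : (0:ℝ) ≤ 1 - u/v := by
      have : u/v ≤ 1 := (div_le_one hv).mpr huv
      linarith
    have hsum : u/v + (1 - u/v) = 1 := by ring
    have := convexOn_exp.2 (mem_univ (-v)) (mem_univ (0:ℝ)) hw1 hw2 hsum
    simp only [smul_eq_mul, mul_zero, add_zero, Real.exp_zero, mul_one] at this
    have harg : u/v * -v = -u := by field_simp
    rw [harg] at this
    linarith
  -- multiply by v
  have key : u * (1 - Real.exp (-v)) ≤ v * (1 - Real.exp (-u)) := by
    have h2 := mul_le_mul_of_nonneg_left hconv hv.le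
    have h3 : v * ((u/v) * Real.exp (-v) + (1 - u/v)) = u * Real.exp (-v) + v - u := by
      field_simp; ring
    rw [h3] at h2
    nlinarith
  have hBexp : B ^ (-Δ) = Real.exp (-v) := by
    rw [Real.rpow_def_of_pos hB0]; congr 1; ring
  have hAexp : A ^ (-Δ) = Real.exp (-u) := by
    rw [Real.rpow_def_of_pos hA0]; congr 1; ring
  rw [hBexp, hAexp]
  have := key
  simp only [u, v] at this
  nlinarith [this, hΔ]

-- second difference bound
lemma second_diff_le {f f' f'' : ℝ → ℝ} {c δ M : ℝ} (hδ : 0 < δ)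
    (hd1 : ∀ y ∈ Icc (c-δ) (c+δ), HasDerivAt f (f' y) y)
    (hd2 : ∀ y ∈ Icc (c-δ) (c+δ), HasDerivAt f' (f'' y) y)
    (hM : ∀ y ∈ Icc (c-δ) (c+δ), f'' y ≤ M) :
    f (c+δ) + f (c-δ) - 2 * f c ≤ M * δ^2 := by
  set g : ℝ → ℝ := fun t => f (c+t) + f (c-t) - 2 * f c - M * t^2 with hg
  have hmem : ∀ t ∈ Icc (0:ℝ) δ, (c+t) ∈ Icc (c-δ) (c+δ) ∧ (c-t) ∈ Icc (c-δ) (c+δ) := by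
    intro t ht
    obtain ⟨h1, h2⟩ := ht
    constructor <;> constructor <;> linarith
  have hgderiv : ∀ t ∈ Icc (0:ℝ) δ,
      HasDerivAt g (f' (c+t) - f' (c-t) - M * (2*t)) t := by
    intro t ht
    obtain ⟨hmem1, hmem2⟩ := hmem t ht
    have h1 : HasDerivAt (fun t => f (c+t)) (f' (c+t)) t := by
      have hin : HasDerivAt (fun t : ℝ => c + t) 1 t := (hasDerivAt_id t).const_add c
      have := (hd1 _ hmem1).comp t hin
      rw [mul_one] at this; exact this
    have h2 : HasDerivAt (fun t => f (c-t)) (-f' (c-t)) t := by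
      have hin : HasDerivAt (fun t : ℝ => c - t) (-1) t := by
        exact (hasDerivAt_id' t).const_sub c
      have := (hd1 _ hmem2).comp t hin
      rw [mul_neg_one] at this; exact this
    have h3 : HasDerivAt (fun t : ℝ => M * t^2) (M * (2*t)) t := by
      have := (hasDerivAt_pow 2 t).const_mul M
      simpa using this
    have := ((h1.add h2).sub (hasDerivAt_const t (2 * f c))).sub h3
    refine this.congr_deriv ?_
    ring
  have hanti : AntitoneOn g (Icc 0 δ) := by
    apply antitoneOn_of_deriv_nonpos (convex_Icc 0 δ)
    · intro t ht
      exact (hgderiv t ht).continuousAt.continuousWithinAt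
    · intro t ht
      rw [interior_Icc] at ht
      exact (hgderiv t (Ioo_subset_Icc_self ht)).differentiableAt.differentiableWithinAt
    · intro t ht
      rw [interior_Icc] at ht
      rw [(hgderiv t (Ioo_subset_Icc_self ht)).deriv]
      obtain ⟨ht0, htδ⟩ := ht
      -- MVT on f' over [c-t, c+t]
      have hlt : c - t < c + t := by linarith
      have hsub : Icc (c-t) (c+t) ⊆ Icc (c-δ) (c+δ) := by
        apply Icc_subset_Icc <;> linarith
      have hcont : ContinuousOn f' (Icc (c-t) (c+t)) := fun y hy =>
        (hd2 y (hsub hy)).continuousAt.continuousWithinAt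
      have hdd : ∀ y ∈ Ioo (c-t) (c+t), HasDerivAt f' (f'' y) y := fun y hy =>
        hd2 y (hsub (Ioo_subset_Icc_self hy))
      obtain ⟨ξ, hξ, hξeq⟩ := exists_hasDerivAt_eq_slope f' f'' hlt hcont hdd
      have hξM : f'' ξ ≤ M := hM ξ (hsub (Ioo_subset_Icc_self hξ))
      have h2t : (2*t) ≠ 0 := by positivity
      have hslope : f' (c+t) - f' (c-t) = f'' ξ * (2*t) := by
        rw [hξeq, show c + t - (c - t) = 2*t from by ring]
        field_simp
      nlinarith [hslope, hξM, ht0]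
  have h0δ := hanti (left_mem_Icc.mpr hδ.le) (right_mem_Icc.mpr hδ.le) hδ.le
  have hg0 : g 0 = 0 := by
    show f (c+0) + f (c-0) - 2*f c - M*0^2 = 0
    rw [add_zero, sub_zero]; ring
  have hgδ : g δ = f (c+δ) + f (c-δ) - 2 * f c - M * δ^2 := by simp [hg]
  rw [hg0, hgδ] at h0δ
  linarith

lemma growth1 {s : ℝ} (hs : 3 ≤ s) : s + 1 ≤ 4 * (3/2 : ℝ) ^ (s - 3) := by
  set t := s - 3 with ht
  have ht0 : 0 ≤ t := by linarith
  have h1 : (3/2 : ℝ) ^ t = Real.exp (Real.log (3/2) * t) := by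
    rw [Real.rpow_def_of_pos (by norm_num)]
  have h2 : Real.exp (0.4 * t) ≤ Real.exp (Real.log (3/2) * t) :=
    Real.exp_le_exp.mpr (mul_le_mul_of_nonneg_right log_three_half ht0)
  have h3 : 1 + 0.4 * t ≤ Real.exp (0.4 * t) := by
    have := Real.add_one_le_exp (0.4 * t)
    linarith
  rw [h1]
  nlinarith [h2, h3]

-- (s+1)(s+2) ≤ 20.3 (3/2)^(s-3) for s ≥ 3
lemma growth2 {s : ℝ} (hs : 3 ≤ s) : (s + 1) * (s + 2) ≤ 20.3 * (3/2 : ℝ) ^ (s - 3) := by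
  set t := s - 3 with ht
  have ht0 : 0 ≤ t := by linarith
  have h1 : (3/2 : ℝ) ^ t = Real.exp (Real.log (3/2) * t) := by
    rw [Real.rpow_def_of_pos (by norm_num)]
  have h2 : Real.exp (0.4 * t) ≤ Real.exp (Real.log (3/2) * t) :=
    Real.exp_le_exp.mpr (mul_le_mul_of_nonneg_right log_three_half ht0)
  have h3 : 1 + (0.4*t) + (0.4*t)^2/2 + (0.4*t)^3/6 ≤ Real.exp (0.4 * t) :=
    exp_cubic_lb (by positivity)
  rw [h1]
  have key : (t + 4) * (t + 5) ≤ 20.3 * (1 + (0.4*t) + (0.4*t)^2/2 + (0.4*t)^3/6) := by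
    nlinarith [sq_nonneg (t - 0.7), mul_nonneg ht0 (sq_nonneg (t - 0.7)), pow_nonneg ht0 3]
  nlinarith [h2, h3, key]

noncomputable def betaLn (k : ℕ) : ℝ := (((k:ℝ) + 3/2)^(5:ℕ))⁻¹ * Real.log (2*(k:ℝ) + 5)

lemma betaLn_nonneg (k : ℕ) : 0 ≤ betaLn k := by
  unfold betaLn
  apply mul_nonneg
  · positivity
  · apply Real.log_nonneg; push_cast; linarith [Nat.cast_nonneg (α := ℝ) k]

lemma log_le_div27 {x : ℝ} (hx : 0 < x) : Real.log x ≤ x / 2.7 := by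
  have h1 : Real.log 2.7 ≤ 1 := by
    rw [Real.log_le_iff_le_exp (by norm_num)]
    linarith [Real.exp_one_gt_d9]
  have h2 : Real.log (x / 2.7) ≤ x / 2.7 - 1 := Real.log_le_sub_one_of_pos (by positivity)
  have h3 : Real.log x = Real.log 2.7 + Real.log (x / 2.7) := by
    rw [← Real.log_mul (by norm_num) (by positivity)]
    congr 1; field_simp
  linarith

lemma log_bound_pow2 {x : ℝ} (hx : 0 < x) (n : ℕ) :
    Real.log x ≤ n * Real.log 2 + (x / 2^n - 1) := by
  have h2n : (0:ℝ) < 2^n := by positivity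
  have h2 : Real.log (x / 2^n) ≤ x / 2^n - 1 := Real.log_le_sub_one_of_pos (by positivity)
  have h3 : Real.log x = Real.log (2^n) + Real.log (x / 2^n) := by
    rw [← Real.log_mul (by positivity) (by positivity)]
    congr 1; field_simp
  rw [Real.log_pow] at h3
  push_cast at h3
  linarith

lemma summable_betaLn : Summable betaLn := by
  have base : Summable (fun k : ℕ => (((k:ℝ) + 1) ^ (2:ℝ))⁻¹) := by
    have h := Real.summable_nat_rpow_inv.mpr (by norm_num : (1:ℝ) < 2)
    have := (summable_nat_add_iff (f := fun n : ℕ => (((n:ℝ)) ^ (2:ℝ))⁻¹) 1).mpr h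
    refine this.congr fun k => ?_
    push_cast; ring_nf
  refine Summable.of_nonneg_of_le betaLn_nonneg (fun k => ?_) base
  unfold betaLn
  have hk1 : (0:ℝ) < (k:ℝ) + 1 := by positivity
  have hk2 : (0:ℝ) < (k:ℝ) + 3/2 := by positivity
  have hlog : Real.log (2*(k:ℝ) + 5) ≤ (2*(k:ℝ) + 5) := by
    have := Real.log_le_sub_one_of_pos (show (0:ℝ) < 2*(k:ℝ)+5 by positivity)
    linarith
  have hup : (2*(k:ℝ) + 5) ≤ 4 * ((k:ℝ) + 3/2) := by linarith [Nat.cast_nonneg (α := ℝ) k]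
  calc (((k:ℝ) + 3/2)^(5:ℕ))⁻¹ * Real.log (2*(k:ℝ) + 5)
      ≤ (((k:ℝ) + 3/2)^(5:ℕ))⁻¹ * (4 * ((k:ℝ) + 3/2)) := by
        apply mul_le_mul_of_nonneg_left (le_trans hlog hup) (by positivity)
    _ = 4 * (((k:ℝ) + 3/2)^(4:ℕ))⁻¹ := by
        rw [show ((k:ℝ) + 3/2)^(5:ℕ) = ((k:ℝ) + 3/2)^(4:ℕ) * ((k:ℝ) + 3/2) from by ring]
        field_simp
    _ ≤ (((k:ℝ) + 1) ^ (2:ℝ))⁻¹ := by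
        rw [show ((k:ℝ)+1) ^ (2:ℝ) = ((k:ℝ)+1) ^ (2:ℕ) from by
          rw [← Real.rpow_natCast ((k:ℝ)+1) 2]; norm_num]
        rw [show (4:ℝ) * (((k:ℝ) + 3/2)^(4:ℕ))⁻¹ = ((((k:ℝ) + 3/2)^(4:ℕ))/4)⁻¹ from by
          field_simp]
        apply inv_anti₀ (by positivity)
        nlinarith [sq_nonneg ((k:ℝ)+1), sq_nonneg ((k:ℝ)+3/2), Nat.cast_nonneg (α := ℝ) k,
          sq_nonneg ((k:ℝ)*(k+1))]
  done

lemma tsum_betaLn_le : ∑' k, betaLn k ≤ 0.244 := by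
  have hsum := summable_betaLn
  rw [← hsum.sum_add_tsum_nat_add 6]
  have hL := Real.log_two_lt_d9.le
  -- bounds on individual logs
  have hlog5 : Real.log 5 ≤ 1.6363 := by
    have := log_bound_pow2 (show (0:ℝ) < 5 by norm_num) 2
    norm_num at this; linarith
  have hlog7 : Real.log 7 ≤ 1.95445 := by
    have := log_bound_pow2 (show (0:ℝ) < 7 by norm_num) 3
    norm_num at this; linarith
  have hlog9 : Real.log 9 ≤ 2.20445 := by
    have := log_bound_pow2 (show (0:ℝ) < 9 by norm_num) 3
    norm_num at this; linarith
  have hlog11 : Real.log 11 ≤ 2.45445 := by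
    have := log_bound_pow2 (show (0:ℝ) < 11 by norm_num) 3
    norm_num at this; linarith
  have hlog13 : Real.log 13 ≤ 2.58509 := by
    have := log_bound_pow2 (show (0:ℝ) < 13 by norm_num) 4
    norm_num at this; linarith
  have hlog15 : Real.log 15 ≤ 2.71009 := by
    have := log_bound_pow2 (show (0:ℝ) < 15 by norm_num) 4
    norm_num at this; linarith
  have hfin : ∑ k ∈ Finset.range 6, betaLn k ≤ 0.2418 := by
    rw [Finset.sum_range_succ, Finset.sum_range_succ, Finset.sum_range_succ,
      Finset.sum_range_succ, Finset.sum_range_succ, Finset.sum_range_one]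
    unfold betaLn
    norm_num
    nlinarith [hlog5, hlog7, hlog9, hlog11, hlog13, hlog15]
  have htail : ∑' k, betaLn (k + 6) ≤ (272/18225) * (7:ℝ)⁻¹ := by
    have hS2 : Summable (fun k : ℕ => (272/18225 : ℝ) * ((((k:ℝ) + 7) * ((k:ℝ) + 8)))⁻¹) :=
      hasSum_telescope7.summable.mul_left _
    have hle : ∀ k : ℕ, betaLn (k + 6) ≤ (272/18225 : ℝ) * ((((k:ℝ) + 7) * ((k:ℝ) + 8)))⁻¹ := by
      intro k
      unfold betaLn
      push_cast
      have hk : (0:ℝ) ≤ (k:ℝ) := Nat.cast_nonneg k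
      have e1 : (k:ℝ) + 6 + 3/2 = (k:ℝ) + 15/2 := by ring
      have e2 : 2*((k:ℝ) + 6) + 5 = 2*(k:ℝ) + 17 := by ring
      rw [e1, e2]
      have hlog : Real.log (2*(k:ℝ) + 17) ≤ (2*(k:ℝ) + 17) / 2.7 :=
        log_le_div27 (by positivity)
      have hup : (2*(k:ℝ) + 17) ≤ (34/15) * ((k:ℝ) + 15/2) := by linarith
      have hd : (2*(k:ℝ) + 17) / 2.7 ≤ ((34/15) * ((k:ℝ) + 15/2)) / 2.7 :=
        (div_le_div_iff_of_pos_right (show (0:ℝ) < 2.7 by norm_num)).mpr hup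
      have h4 : (((k:ℝ) + 15/2)^(4:ℕ))⁻¹ ≤ (225/4:ℝ)⁻¹ * ((((k:ℝ)+7)*((k:ℝ)+8)))⁻¹ := by
        rw [← mul_inv]
        apply inv_anti₀ (by positivity)
        nlinarith [sq_nonneg ((k:ℝ) + 15/2), hk, sq_nonneg (k:ℝ)]
      calc (((k:ℝ) + 15/2)^(5:ℕ))⁻¹ * Real.log (2*(k:ℝ) + 17)
          ≤ (((k:ℝ) + 15/2)^(5:ℕ))⁻¹ * (((34/15) * ((k:ℝ) + 15/2)) / 2.7) := by
            apply mul_le_mul_of_nonneg_left (le_trans hlog hd) (by positivity)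
        _ = (68/81) * (((k:ℝ) + 15/2)^(4:ℕ))⁻¹ := by
            rw [show ((k:ℝ) + 15/2)^(5:ℕ) = ((k:ℝ) + 15/2)^(4:ℕ) * ((k:ℝ) + 15/2) from by ring]
            have : ((k:ℝ) + 15/2) ≠ 0 := by positivity
            field_simp
            ring
        _ ≤ (68/81) * ((225/4:ℝ)⁻¹ * ((((k:ℝ)+7)*((k:ℝ)+8)))⁻¹) :=
            mul_le_mul_of_nonneg_left h4 (by norm_num)
        _ = (272/18225 : ℝ) * ((((k:ℝ) + 7) * ((k:ℝ) + 8)))⁻¹ := by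
            rw [← mul_assoc]
            norm_num
    calc ∑' k, betaLn (k + 6)
          ≤ ∑' (k : ℕ), (272/18225 : ℝ) * ((((k:ℝ) + 7) * ((k:ℝ) + 8)))⁻¹ :=
          Summable.tsum_le_tsum hle ((summable_nat_add_iff 6).mpr summable_betaLn) hS2
      _ = (272/18225) * (7:ℝ)⁻¹ := by
          rw [tsum_mul_left, hasSum_telescope7.tsum_eq]
  have : (272/18225 : ℝ) * (7:ℝ)⁻¹ ≤ 0.00214 := by norm_num
  linarith

lemma psi_second_diff {s₁ s₂ c δ : ℝ} (h2 : 2 ≤ c - δ) (hδ : 0 < δ) (hs1 : 3 ≤ s₁)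
    (hlt : s₁ < s₂) :
    ((c+δ) ^ (-s₁) - (c+δ) ^ (-s₂)) + ((c-δ) ^ (-s₁) - (c-δ) ^ (-s₂))
      - 2 * (c ^ (-s₁) - c ^ (-s₂))
    ≤ (s₁*(s₁+1) * (((c - δ) ^ (s₁+2))⁻¹) * (1 - (c+δ) ^ (-(s₂-s₁)))) * δ^2 := by
  have hypos : ∀ y ∈ Icc (c-δ) (c+δ), (0:ℝ) < y := fun y hy => by
    have := hy.1; linarith
  have hd1 : ∀ y ∈ Icc (c-δ) (c+δ),
      HasDerivAt (fun y : ℝ => y ^ (-s₁) - y ^ (-s₂))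
        ((-s₁) * y ^ (-s₁-1) - (-s₂) * y ^ (-s₂-1)) y := by
    intro y hy
    have hy0 : y ≠ 0 := (hypos y hy).ne'
    exact ((Real.hasDerivAt_rpow_const (p := -s₁) (Or.inl hy0)).sub
      (Real.hasDerivAt_rpow_const (p := -s₂) (Or.inl hy0)))
  have hd2 : ∀ y ∈ Icc (c-δ) (c+δ),
      HasDerivAt (fun y : ℝ => (-s₁) * y ^ (-s₁-1) - (-s₂) * y ^ (-s₂-1))
        ((-s₁) * (-s₁-1) * y ^ (-s₁-2) - (-s₂) * (-s₂-1) * y ^ (-s₂-2)) y := by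
    intro y hy
    have hy0 : y ≠ 0 := (hypos y hy).ne'
    have d1 := (Real.hasDerivAt_rpow_const (x := y) (p := -s₁-1) (Or.inl hy0)).const_mul (-s₁)
    have d2 := (Real.hasDerivAt_rpow_const (x := y) (p := -s₂-1) (Or.inl hy0)).const_mul (-s₂)
    rw [show -s₁ - 1 - 1 = -s₁ - 2 from by ring] at d1
    rw [show -s₂ - 1 - 1 = -s₂ - 2 from by ring] at d2
    have h := d1.sub d2
    refine h.congr_deriv ?_
    ring
  have hM : ∀ y ∈ Icc (c-δ) (c+δ),
      (-s₁) * (-s₁-1) * y ^ (-s₁-2) - (-s₂) * (-s₂-1) * y ^ (-s₂-2)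
      ≤ s₁*(s₁+1) * (((c - δ) ^ (s₁+2))⁻¹) * (1 - (c+δ) ^ (-(s₂-s₁))) := by
    intro y hy
    have hy0 : (0:ℝ) < y := hypos y hy
    have hy2 : (2:ℝ) ≤ y := le_trans h2 hy.1
    have e1 : y ^ (-s₂-2) = y ^ (-s₁-2) * y ^ (-(s₂-s₁)) := by
      rw [← Real.rpow_add hy0]; congr 1; ring
    have hu0 : (0:ℝ) < y ^ (-s₁-2) := Real.rpow_pos_of_pos hy0 _
    have hv0 : (0:ℝ) < y ^ (-(s₂-s₁)) := Real.rpow_pos_of_pos hy0 _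
    have hv1 : y ^ (-(s₂-s₁)) ≤ 1 :=
      Real.rpow_le_one_of_one_le_of_nonpos (by linarith) (by linarith)
    have hvlo : (c+δ) ^ (-(s₂-s₁)) ≤ y ^ (-(s₂-s₁)) := by
      rw [Real.rpow_neg hy0.le, Real.rpow_neg (by linarith : (0:ℝ) ≤ c+δ)]
      apply inv_anti₀ (Real.rpow_pos_of_pos hy0 _)
      exact Real.rpow_le_rpow hy0.le hy.2 (by linarith)
    have huhi : y ^ (-s₁-2) ≤ ((c - δ) ^ (s₁+2))⁻¹ := by
      rw [show -s₁-2 = -(s₁+2) from by ring, Real.rpow_neg hy0.le]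
      apply inv_anti₀ (Real.rpow_pos_of_pos (by linarith) _)
      exact Real.rpow_le_rpow (by linarith) hy.1 (by linarith)
    have hss : s₁*(s₁+1) ≤ s₂*(s₂+1) := by nlinarith
    have hcd0 : (0:ℝ) < ((c - δ) ^ (s₁+2))⁻¹ :=
      inv_pos.mpr (Real.rpow_pos_of_pos (by linarith) _)
    have step1 : (-s₁) * (-s₁-1) * y ^ (-s₁-2) - (-s₂) * (-s₂-1) * y ^ (-s₂-2)
        ≤ s₁*(s₁+1) * (y ^ (-s₁-2) * (1 - y ^ (-(s₂-s₁)))) := by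
      rw [e1]
      nlinarith [mul_pos hu0 hv0]
    have step2 : y ^ (-s₁-2) * (1 - y ^ (-(s₂-s₁)))
        ≤ ((c - δ) ^ (s₁+2))⁻¹ * (1 - (c+δ) ^ (-(s₂-s₁))) :=
      mul_le_mul huhi (by linarith) (by linarith) hcd0.le
    calc (-s₁) * (-s₁-1) * y ^ (-s₁-2) - (-s₂) * (-s₂-1) * y ^ (-s₂-2)
        ≤ s₁*(s₁+1) * (y ^ (-s₁-2) * (1 - y ^ (-(s₂-s₁)))) := step1
      _ ≤ s₁*(s₁+1) * (((c - δ) ^ (s₁+2))⁻¹ * (1 - (c+δ) ^ (-(s₂-s₁)))) := by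
          apply mul_le_mul_of_nonneg_left step2 (by nlinarith)
      _ = s₁*(s₁+1) * (((c - δ) ^ (s₁+2))⁻¹) * (1 - (c+δ) ^ (-(s₂-s₁))) := by ring
  have := second_diff_le hδ hd1 hd2 hM
  convert this using 2 <;> ring

lemma summable_hz {x s : ℝ} (hx : 1 ≤ x) (hs : 3 ≤ s) :
    Summable (fun k : ℕ => ((x + (k : ℝ)) ^ s)⁻¹) :=
  summable_invpow hx (by linarith)

lemma hz_nonneg {x s : ℝ} (hx : 0 < x) : 0 ≤ hurwitzZ s x := by
  unfold hurwitzZ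
  refine tsum_nonneg (fun k => ?_)
  have : (0:ℝ) < x + k := by positivity
  positivity

lemma hz_lt_hz_one {x s : ℝ} (hx : 1 < x) (hs : 3 ≤ s) :
    hurwitzZ s x < hurwitzZ s 1 := by
  unfold hurwitzZ
  have hs0 : (0:ℝ) < s := by linarith
  refine Summable.tsum_lt_tsum (i := 0) (fun k => ?_) ?_ (summable_hz hx.le hs) (summable_hz le_rfl hs)
  · have hxk : (0:ℝ) < 1 + k := by positivity
    apply inv_anti₀ (by positivity)
    exact Real.rpow_le_rpow (by positivity) (by linarith) hs0.le
  · simp only [Nat.cast_zero, add_zero]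
    have h2 : (1:ℝ) < x ^ s := by
      calc (1:ℝ) = 1 ^ s := (Real.one_rpow s).symm
        _ < x ^ s := Real.rpow_lt_rpow (by norm_num) hx hs0
    have h3 : ((x:ℝ) ^ s)⁻¹ < 1⁻¹ := by
      apply inv_strictAnti₀ (by norm_num) h2
    rw [Real.one_rpow]
    exact h3

lemma lamH_pos {τ s : ℝ} (hτ0 : 0 < τ) (hτ : τ ≤ 1/2) (hs : 3 ≤ s) : 0 < LamH τ s := by
  unfold LamH
  have hq : (0:ℝ) < 1 - τ := by linarith
  have h1 : hurwitzZ s (2 - τ) < hurwitzZ s 1 := hz_lt_hz_one (by linarith) hs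
  have h2 : hurwitzZ s (1 + τ) < hurwitzZ s 1 := hz_lt_hz_one (by linarith) hs
  have hp : (0:ℝ) < (1-τ) ^ s := Real.rpow_pos_of_pos hq s
  nlinarith

lemma hz_mono_s {s : ℝ} (hs : 3 ≤ s) : hurwitzZ s 1 ≤ hurwitzZ 3 1 := by
  unfold hurwitzZ
  apply Summable.tsum_le_tsum _ (summable_hz le_rfl hs) (summable_hz le_rfl le_rfl)
  intro k
  apply inv_anti₀ (by positivity)
  exact Real.rpow_le_rpow_of_exponent_le (by linarith [Nat.cast_nonneg (α := ℝ) k]) hs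

lemma lamH_tendsto {τ : ℝ} (hτ0 : 0 < τ) (hτ : τ ≤ 1/2) :
    Tendsto (fun s : ℝ => LamH τ s) atTop (nhds 0) := by
  have hq0 : (0:ℝ) < 1 - τ := by linarith
  have hq1 : (1:ℝ) - τ < 1 := by linarith
  have hup : ∀ s : ℝ, 3 ≤ s → LamH τ s ≤ (2 * hurwitzZ 3 1) * (1-τ)^s := by
    intro s hs
    unfold LamH
    have hD : 2 * hurwitzZ s 1 - hurwitzZ s (2 - τ) - hurwitzZ s (1 + τ)
        ≤ 2 * hurwitzZ 3 1 := by
      have := hz_mono_s hs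
      have h2 : (0:ℝ) ≤ hurwitzZ s (2-τ) := hz_nonneg (by linarith)
      have h3 : (0:ℝ) ≤ hurwitzZ s (1+τ) := hz_nonneg (by linarith)
      linarith
    have hp : (0:ℝ) ≤ (1-τ) ^ s := (Real.rpow_pos_of_pos hq0 s).le
    nlinarith
  have hlow : ∀ s : ℝ, 3 ≤ s → 0 ≤ LamH τ s := fun s hs => (lamH_pos hτ0 hτ hs).le
  have htend : Tendsto (fun s : ℝ => (2 * hurwitzZ 3 1) * (1-τ)^s) atTop (nhds 0) := by
    have := (tendsto_rpow_atTop_of_base_lt_one (1-τ) (by linarith) hq1).const_mul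
      (2 * hurwitzZ 3 1)
    simpa using this
  apply tendsto_of_tendsto_of_tendsto_of_le_of_le' tendsto_const_nhds htend
  · filter_upwards [eventually_ge_atTop (3:ℝ)] with s hs using hlow s hs
  · filter_upwards [eventually_ge_atTop (3:ℝ)] with s hs using hup s hs

/-- the scaled remainder terms -/
noncomputable def rr (τ s : ℝ) (k : ℕ) : ℝ :=
  (((2 - τ + k) / (1 - τ)) ^ s)⁻¹ + (((2 + τ + k) / (1 - τ)) ^ s)⁻¹
    - 2 * (((2 + (k:ℝ)) / (1 - τ)) ^ s)⁻¹

section main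
variable {τ : ℝ} (hτ0 : 0 < τ) (hτ : τ ≤ 1/2)

lemma summable_scaled {c s : ℝ} (hτ0 : 0 < τ) (hτ : τ ≤ 1/2) (hc : 1 ≤ c) (hs : 3 ≤ s) :
    Summable (fun k : ℕ => (((c + k) / (1 - τ)) ^ s)⁻¹) := by
  have hq0 : (0:ℝ) < 1 - τ := by linarith
  refine Summable.of_nonneg_of_le (fun k => ?_) (fun k => ?_) (summable_hz hc hs)
  · have : (0:ℝ) < (c + k) / (1-τ) := by positivity
    positivity
  · have h1 : (0:ℝ) < c + k := by positivity
    have h2 : c + (k:ℝ) ≤ (c + k) / (1 - τ) := by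
      rw [le_div_iff₀ hq0]
      nlinarith
    apply inv_anti₀ (by positivity)
    exact Real.rpow_le_rpow h1.le h2 (by linarith)

include hτ0 hτ in
lemma summable_rr {s : ℝ} (hs : 3 ≤ s) : Summable (fun k => rr τ s k) := by
  unfold rr
  exact ((summable_scaled hτ0 hτ (by linarith : (1:ℝ) ≤ 2 - τ) hs).add
    (summable_scaled hτ0 hτ (by linarith : (1:ℝ) ≤ 2 + τ) hs)).sub
    (((summable_scaled hτ0 hτ (by norm_num : (1:ℝ) ≤ 2) hs)).mul_left 2)

include hτ0 hτ in
lemma lamH_eq {s : ℝ} (hs : 3 ≤ s) :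
    LamH τ s = (2 * (1-τ)^s - ((1-τ)/(1+τ))^s) - ∑' k, rr τ s k := by
  have hq0 : (0:ℝ) < 1 - τ := by linarith
  have hτ1 : (0:ℝ) < 1 + τ := by linarith
  -- shift identities
  have h1 : hurwitzZ s 1 = 1 + ∑' k : ℕ, (((2:ℝ) + k) ^ s)⁻¹ := by
    unfold hurwitzZ
    rw [Summable.tsum_eq_zero_add (summable_hz le_rfl hs)]
    congr 1
    · norm_num
    · exact tsum_congr fun k => by push_cast; ring_nf
  have h2 : hurwitzZ s (1+τ) = (((1:ℝ)+τ) ^ s)⁻¹ + ∑' k : ℕ, ((2 + τ + (k:ℝ)) ^ s)⁻¹ := by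
    unfold hurwitzZ
    rw [Summable.tsum_eq_zero_add (summable_hz (by linarith) hs)]
    congr 1
    · norm_num
    · exact tsum_congr fun k => by push_cast; ring_nf
  have h3 : hurwitzZ s (2-τ) = ∑' k : ℕ, ((2 - τ + (k:ℝ)) ^ s)⁻¹ := rfl
  -- scaling identities
  have hscale : ∀ c : ℝ, 1 ≤ c →
      (1-τ)^s * ∑' k : ℕ, ((c + (k:ℝ)) ^ s)⁻¹ = ∑' k : ℕ, (((c + k) / (1-τ)) ^ s)⁻¹ := by
    intro c hc
    rw [← tsum_mul_left]
    refine tsum_congr fun k => ?_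
    have hck : (0:ℝ) < c + k := by positivity
    rw [Real.div_rpow hck.le hq0.le]
    rw [inv_div]
    rw [div_eq_mul_inv]
  have hw : ((1-τ)/(1+τ))^s = (1-τ)^s * (((1:ℝ)+τ)^s)⁻¹ := by
    rw [Real.div_rpow hq0.le hτ1.le, div_eq_mul_inv]
  -- assemble
  unfold LamH
  rw [h1, h2, h3]
  have hsum1 := hscale (2-τ) (by linarith)
  have hsum2 := hscale (2+τ) (by linarith)
  have hsum3 := hscale 2 (by norm_num)
  have hrr : ∑' k, rr τ s k
      = (∑' k : ℕ, (((2 - τ + k) / (1-τ)) ^ s)⁻¹) + (∑' k : ℕ, (((2 + τ + k) / (1-τ)) ^ s)⁻¹)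
        - 2 * ∑' k : ℕ, (((2 + (k:ℝ)) / (1-τ)) ^ s)⁻¹ := by
    unfold rr
    rw [Summable.tsum_sub, Summable.tsum_add, tsum_mul_left]
    · exact summable_scaled hτ0 hτ (by linarith) hs
    · exact summable_scaled hτ0 hτ (by linarith) hs
    · exact (summable_scaled hτ0 hτ (by linarith) hs).add
        (summable_scaled hτ0 hτ (by linarith) hs)
    · exact (summable_scaled hτ0 hτ (by norm_num) hs).mul_left 2
  rw [hrr, ← hsum1, ← hsum2, ← hsum3, hw]
  ring
end main

set_option maxHeartbeats 1000000 in
lemma rr_diff_le {τ s₁ s₂ : ℝ} (hτ0 : 0 < τ) (hτ : τ ≤ 1/2) (hs1 : 3 ≤ s₁)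
    (hlt : s₁ < s₂) (k : ℕ) :
    rr τ s₁ k - rr τ s₂ k ≤
      ((1 - (1-τ)^(s₂-s₁)) * (τ^2 * (s₁*(s₁+1)) * (1-τ)^s₁ * (((3/2:ℝ)^(s₁-3))⁻¹)
        / (-Real.log (1-τ)))) * betaLn k := by
  have hq0 : (0:ℝ) < 1 - τ := by linarith
  have hq1 : (1:ℝ) - τ < 1 := by linarith
  have hkc : (0:ℝ) ≤ (k:ℝ) := Nat.cast_nonneg k
  set δ := τ / (1-τ) with hδdef
  set c := (2 + (k:ℝ)) / (1-τ) with hcdef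
  have hδ0 : 0 < δ := by rw [hδdef]; positivity
  have hc1 : c - δ = (2 - τ + k) / (1-τ) := by
    rw [hcdef, hδdef, div_sub_div_same]; ring_nf
  have hc2 : c + δ = (2 + τ + k) / (1-τ) := by
    rw [hcdef, hδdef, ← add_div]; ring_nf
  have hb1 : (2:ℝ) ≤ c - δ := by
    rw [hc1, le_div_iff₀ hq0]; nlinarith
  have hcp : (0:ℝ) < c := by rw [hcdef]; positivity
  have hb2p : (0:ℝ) < c + δ := by linarith
  have hb1p : (0:ℝ) < c - δ := by linarith
  -- rewrite rr difference as psi second difference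
  have hrr : ∀ s : ℝ, rr τ s k = (c+δ) ^ (-s) + (c-δ) ^ (-s) - 2 * c ^ (-s) := by
    intro s
    unfold rr
    rw [← hc1, ← hc2, ← hcdef, Real.rpow_neg hb2p.le, Real.rpow_neg hb1p.le,
      Real.rpow_neg hcp.le]
    ring
  have key := psi_second_diff hb1 hδ0 hs1 hlt
  have hdiff : rr τ s₁ k - rr τ s₂ k ≤
      (s₁*(s₁+1) * (((c - δ) ^ (s₁+2))⁻¹) * (1 - (c+δ) ^ (-(s₂-s₁)))) * δ^2 := by
    rw [hrr s₁, hrr s₂]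
    calc (c+δ) ^ (-s₁) + (c-δ) ^ (-s₁) - 2 * c ^ (-s₁)
          - ((c+δ) ^ (-s₂) + (c-δ) ^ (-s₂) - 2 * c ^ (-s₂))
        = ((c+δ) ^ (-s₁) - (c+δ) ^ (-s₂)) + ((c-δ) ^ (-s₁) - (c-δ) ^ (-s₂))
          - 2 * (c ^ (-s₁) - c ^ (-s₂)) := by ring
      _ ≤ _ := key
  refine le_trans hdiff ?_
  -- now the scaling bounds
  have ha0 : 0 < -Real.log (1-τ) := by
    have := Real.log_neg hq0 hq1
    linarith
  have hEq : (0:ℝ) < 1 - (1-τ)^(s₂-s₁) := by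
    have h1 : (1-τ)^(s₂-s₁) < 1 :=
      Real.rpow_lt_one hq0.le hq1 (by linarith)
    linarith
  have hE2 : (0:ℝ) < ((3/2:ℝ)^(s₁-3))⁻¹ :=
    inv_pos.mpr (Real.rpow_pos_of_pos (by norm_num) _)
  -- bound 1: the inverse power factor
  have hr1 : ((c - δ) ^ (s₁+2))⁻¹
      ≤ (1-τ)^(s₁+2) * ((((k:ℝ) + 3/2)^(5:ℕ))⁻¹ * ((3/2:ℝ)^(s₁-3))⁻¹) := by
    have e1 : ((c - δ) ^ (s₁+2))⁻¹ = (1-τ)^(s₁+2) * ((2 - τ + (k:ℝ)) ^ (s₁+2))⁻¹ := by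
      rw [hc1, Real.div_rpow (by linarith) hq0.le, inv_div, div_eq_mul_inv]
    rw [e1]
    apply mul_le_mul_of_nonneg_left _ (Real.rpow_pos_of_pos hq0 _).le
    have e2 : ((2 - τ + (k:ℝ)) ^ (s₁+2))⁻¹ ≤ (((k:ℝ) + 3/2) ^ (s₁+2))⁻¹ := by
      apply inv_anti₀ (Real.rpow_pos_of_pos (by linarith) _)
      exact Real.rpow_le_rpow (by linarith) (by linarith) (by linarith)
    refine le_trans e2 ?_
    have e3 : ((k:ℝ) + 3/2) ^ (s₁+2) = ((k:ℝ) + 3/2)^(5:ℕ) * ((k:ℝ) + 3/2) ^ (s₁-3) := by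
      rw [← Real.rpow_natCast ((k:ℝ) + 3/2) 5, ← Real.rpow_add (by linarith)]
      congr 1
      push_cast
      ring
    rw [e3, mul_inv]
    apply mul_le_mul_of_nonneg_left _ (by positivity)
    apply inv_anti₀ (Real.rpow_pos_of_pos (by norm_num) _)
    exact Real.rpow_le_rpow (by norm_num) (by linarith) (by linarith)
  -- bound 2: the ratio factor
  have hr4 : 1 - (c+δ) ^ (-(s₂-s₁))
      ≤ Real.log (2*(k:ℝ)+5) * (1 - (1-τ)^(s₂-s₁)) / (-Real.log (1-τ)) := by
    have hA1 : 1 < (1-τ)⁻¹ := (one_lt_inv₀ hq0).2 hq1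
    have hAB : (1-τ)⁻¹ ≤ c + δ := by
      rw [hc2, inv_eq_one_div]
      exact (div_le_div_iff_of_pos_right hq0).mpr (by linarith)
    have hratio := one_sub_rpow_ratio hA1 hAB (show 0 < s₂ - s₁ by linarith)
    rw [Real.log_inv] at hratio
    have hinv : ((1-τ)⁻¹) ^ (-(s₂-s₁)) = (1-τ)^(s₂-s₁) := by
      rw [Real.inv_rpow hq0.le, Real.rpow_neg hq0.le, inv_inv]
    rw [hinv] at hratio
    have hlogle : Real.log (c+δ) ≤ Real.log (2*(k:ℝ)+5) := by
      apply Real.log_le_log hb2p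
      rw [hc2, div_le_iff₀ hq0]
      nlinarith
    have h1mq : (0:ℝ) ≤ 1 - (1-τ)^(s₂-s₁) := hEq.le
    have hstep : -Real.log (1-τ) * (1 - (c+δ) ^ (-(s₂-s₁)))
        ≤ Real.log (2*(k:ℝ)+5) * (1 - (1-τ)^(s₂-s₁)) := by
      refine le_trans hratio ?_
      exact mul_le_mul_of_nonneg_right hlogle h1mq
    rw [le_div_iff₀ ha0]
    linarith [hstep]
  -- assemble
  have hfact : δ^2 * (1-τ)^(s₁+2) = τ^2 * (1-τ)^s₁ := by
    have e1 : (1-τ)^(s₁+2) = (1-τ)^s₁ * (1-τ)^(2:ℕ) := by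
      rw [← Real.rpow_natCast (1-τ) 2, ← Real.rpow_add hq0]
      norm_num
    rw [e1, hδdef]
    field_simp
  have hnn1 : (0:ℝ) ≤ s₁*(s₁+1) := by nlinarith
  have hnn2 : (0:ℝ) ≤ 1 - (c+δ) ^ (-(s₂-s₁)) := by
    have : (c+δ) ^ (-(s₂-s₁)) ≤ 1 :=
      Real.rpow_le_one_of_one_le_of_nonpos (by linarith) (by linarith)
    linarith
  have hnn3 : (0:ℝ) ≤ ((c - δ) ^ (s₁+2))⁻¹ :=
    (inv_pos.mpr (Real.rpow_pos_of_pos hb1p _)).le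
  have hnn4 : (0:ℝ) ≤ Real.log (2*(k:ℝ)+5) := Real.log_nonneg (by linarith)
  have hR1 : (0:ℝ) ≤ (1-τ)^(s₁+2) * ((((k:ℝ) + 3/2)^(5:ℕ))⁻¹ * ((3/2:ℝ)^(s₁-3))⁻¹) := by
    positivity
  have hR4 : (0:ℝ) ≤ Real.log (2*(k:ℝ)+5) * (1 - (1-τ)^(s₂-s₁)) / (-Real.log (1-τ)) := by
    apply div_nonneg (mul_nonneg hnn4 hEq.le) ha0.le
  have hMle : s₁*(s₁+1) * (((c - δ) ^ (s₁+2))⁻¹) * (1 - (c+δ) ^ (-(s₂-s₁)))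
      ≤ s₁*(s₁+1) * ((1-τ)^(s₁+2) * ((((k:ℝ) + 3/2)^(5:ℕ))⁻¹ * ((3/2:ℝ)^(s₁-3))⁻¹))
        * (Real.log (2*(k:ℝ)+5) * (1 - (1-τ)^(s₂-s₁)) / (-Real.log (1-τ))) := by
    apply mul_le_mul _ hr4 hnn2 _
    · exact mul_le_mul_of_nonneg_left hr1 hnn1
    · exact mul_nonneg hnn1 hR1
  calc s₁*(s₁+1) * (((c - δ) ^ (s₁+2))⁻¹) * (1 - (c+δ) ^ (-(s₂-s₁))) * δ^2
      ≤ s₁*(s₁+1) * ((1-τ)^(s₁+2) * ((((k:ℝ) + 3/2)^(5:ℕ))⁻¹ * ((3/2:ℝ)^(s₁-3))⁻¹))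
        * (Real.log (2*(k:ℝ)+5) * (1 - (1-τ)^(s₂-s₁)) / (-Real.log (1-τ))) * δ^2 := by
        apply mul_le_mul_of_nonneg_right hMle (sq_nonneg δ)
    _ = ((1 - (1-τ)^(s₂-s₁)) * (τ^2 * (s₁*(s₁+1)) * (1-τ)^s₁ * (((3/2:ℝ)^(s₁-3))⁻¹)
        / (-Real.log (1-τ)))) * betaLn k := by
        unfold betaLn
        linear_combination (s₁*(s₁+1) * ((((k:ℝ) + 3/2)^(5:ℕ))⁻¹ * ((3/2:ℝ)^(s₁-3))⁻¹)
          * Real.log (2*(k:ℝ)+5) * (1 - (1-τ)^(s₂-s₁)) / (-Real.log (1-τ))) * hfact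

lemma P_diff_lower {τ s₁ s₂ : ℝ} (hτ0 : 0 < τ) (hτ : τ ≤ 1/2) (hs1 : 3 ≤ s₁)
    (hlt : s₁ < s₂) :
    2*(1 - (1-τ)^(s₂-s₁)) * (1-τ)^s₁ * (1 - (((1+τ):ℝ)^s₁)⁻¹)
    ≤ (2*(1-τ)^s₁ - ((1-τ)/(1+τ))^s₁) - (2*(1-τ)^s₂ - ((1-τ)/(1+τ))^s₂) := by
  have hq0 : (0:ℝ) < 1 - τ := by linarith
  have hq1 : (1:ℝ) - τ < 1 := by linarith
  have ht1 : (0:ℝ) < 1 + τ := by linarith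
  have hw0 : (0:ℝ) < (1-τ)/(1+τ) := by positivity
  have hq2 : (1-τ)^s₂ = (1-τ)^s₁ * (1-τ)^(s₂-s₁) := by
    rw [← Real.rpow_add hq0]; congr 1; ring
  have hw2 : ((1-τ)/(1+τ))^s₂ = ((1-τ)/(1+τ))^s₁ * ((1-τ)/(1+τ))^(s₂-s₁) := by
    rw [← Real.rpow_add hw0]; congr 1; ring
  have hwq : (1-τ)*(1-τ) ≤ (1-τ)/(1+τ) := by
    rw [le_div_iff₀ ht1]; nlinarith [mul_nonneg hq0.le (sq_nonneg τ)]
  have hwΔ : ((1-τ)^(s₂-s₁)) * ((1-τ)^(s₂-s₁)) ≤ ((1-τ)/(1+τ))^(s₂-s₁) := by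
    rw [← Real.mul_rpow hq0.le hq0.le]
    exact Real.rpow_le_rpow (by positivity) hwq (by linarith)
  have hE0 : (0:ℝ) < (1-τ)^(s₂-s₁) := Real.rpow_pos_of_pos hq0 _
  have hE1 : (1-τ)^(s₂-s₁) ≤ 1 := Real.rpow_le_one hq0.le hq1.le (by linarith)
  have hweq : ((1-τ)/(1+τ))^s₁ = (1-τ)^s₁ * (((1+τ):ℝ)^s₁)⁻¹ := by
    rw [Real.div_rpow hq0.le ht1.le, div_eq_mul_inv]
  have hQ0 : (0:ℝ) < (1-τ)^s₁ := Real.rpow_pos_of_pos hq0 _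
  have hB0 : (0:ℝ) < (((1+τ):ℝ)^s₁)⁻¹ :=
    inv_pos.mpr (Real.rpow_pos_of_pos ht1 _)
  rw [hq2, hw2, hweq]
  nlinarith [mul_nonneg (mul_pos hQ0 hB0).le (sq_nonneg (1 - (1-τ)^(s₂-s₁))),
    mul_le_mul_of_nonneg_left hwΔ (mul_pos hQ0 hB0).le]

lemma final_numeric {τ s₁ a E3 Sβ B : ℝ} (hτ0 : 0 < τ) (hτ : τ ≤ 1/2) (hs1 : 3 ≤ s₁)
    (ha : τ + τ^2/2 ≤ a) (hSβ0 : 0 ≤ Sβ) (hSβ : Sβ ≤ 0.244)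
    (hE3 : 0 < E3) (hu1 : (s₁+1)*E3 ≤ 4) (hu2 : ((s₁+1)*(s₁+2))*E3 ≤ 20.3)
    (hB0 : 0 ≤ B) (hB : B ≤ (1+s₁*τ)⁻¹) :
    τ^2*(s₁*(s₁+1))*E3*Sβ / a < 2*(1-B) := by
  have ha0 : 0 < a := by nlinarith
  have hP0 : (0:ℝ) < 1 + s₁*τ := by nlinarith
  have hden : 0 < τ*(1+τ/2) := by nlinarith
  have hBP : 1 - (1+s₁*τ)⁻¹ ≤ 1 - B := by linarith
  have hBP2 : 1 - (1+s₁*τ)⁻¹ = s₁*τ/(1+s₁*τ) := by field_simp; ring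
  -- key polynomial inequality
  have e1 : (s₁+1)*E3*(1+s₁*τ) ≤ 4 + 12.3*τ := by nlinarith
  have e2 : Sβ*((s₁+1)*E3*(1+s₁*τ)) ≤ 0.244*(4+12.3*τ) := by
    have h1 : (0:ℝ) ≤ (s₁+1)*E3*(1+s₁*τ) := by positivity
    nlinarith
  have e3 : (0.244:ℝ)*(4+12.3*τ) < 2+τ := by nlinarith
  have key : τ^2*(s₁*(s₁+1))*E3*Sβ * (1+s₁*τ) < 2*s₁*τ * (τ*(1+τ/2)) := by
    have hsτ : (0:ℝ) < s₁*τ^2 := by nlinarith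
    have h4 : Sβ*((s₁+1)*E3*(1+s₁*τ)) < 2+τ := lt_of_le_of_lt e2 e3
    have h5 := mul_lt_mul_of_pos_left h4 hsτ
    nlinarith [h5]
  have d1 : τ^2*(s₁*(s₁+1))*E3*Sβ / a ≤ τ^2*(s₁*(s₁+1))*E3*Sβ / (τ*(1+τ/2)) := by
    apply div_le_div_of_nonneg_left ?_ hden ?_
    · positivity
    · linarith
  have d2 : τ^2*(s₁*(s₁+1))*E3*Sβ / (τ*(1+τ/2)) < 2*s₁*τ/(1+s₁*τ) := by
    rw [div_lt_div_iff₀ hden hP0]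
    linarith [key]
  have d3 : 2*s₁*τ/(1+s₁*τ) ≤ 2*(1-B) := by
    have : 2*s₁*τ/(1+s₁*τ) = 2*(s₁*τ/(1+s₁*τ)) := by ring
    rw [this, ← hBP2]
    linarith
  linarith

set_option maxHeartbeats 1000000 in
lemma lamH_strict {τ s₁ s₂ : ℝ} (hτ0 : 0 < τ) (hτ : τ ≤ 1/2) (hs1 : 3 ≤ s₁)
    (hlt : s₁ < s₂) : LamH τ s₂ < LamH τ s₁ := by
  have hs2 : 3 ≤ s₂ := by linarith
  have hq0 : (0:ℝ) < 1 - τ := by linarith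
  have hq1 : (1:ℝ) - τ < 1 := by linarith
  have ht1 : (0:ℝ) < 1 + τ := by linarith
  set Cσ : ℝ := (1 - (1-τ)^(s₂-s₁)) * (τ^2 * (s₁*(s₁+1)) * (1-τ)^s₁ * (((3/2:ℝ)^(s₁-3))⁻¹)
      / (-Real.log (1-τ))) with hCσ
  have hsum1 : Summable (fun k => rr τ s₁ k) := summable_rr hτ0 hτ hs1
  have hsum2 : Summable (fun k => rr τ s₂ k) := summable_rr hτ0 hτ hs2
  have hsub : ∑' k, rr τ s₁ k - ∑' k, rr τ s₂ k = ∑' k, (rr τ s₁ k - rr τ s₂ k) :=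
    (Summable.tsum_sub hsum1 hsum2).symm
  have hbound : ∑' k, (rr τ s₁ k - rr τ s₂ k) ≤ Cσ * ∑' k, betaLn k := by
    rw [← tsum_mul_left]
    exact Summable.tsum_le_tsum (fun k => rr_diff_le hτ0 hτ hs1 hlt k) (hsum1.sub hsum2)
      (summable_betaLn.mul_left Cσ)
  -- numeric strict inequality
  have hG0 : (0:ℝ) < 1 - (1-τ)^(s₂-s₁) := by
    have h1 : (1-τ)^(s₂-s₁) < 1 := Real.rpow_lt_one hq0.le hq1 (by linarith)
    linarith
  have hQ0 : (0:ℝ) < (1-τ)^s₁ := Real.rpow_pos_of_pos hq0 _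
  have hR0 : (0:ℝ) < (3/2:ℝ)^(s₁-3) := Real.rpow_pos_of_pos (by norm_num) _
  have hE3 : (0:ℝ) < ((3/2:ℝ)^(s₁-3))⁻¹ := inv_pos.mpr hR0
  have hu1 : (s₁+1) * ((3/2:ℝ)^(s₁-3))⁻¹ ≤ 4 := by
    rw [mul_inv_le_iff₀ hR0]
    calc s₁ + 1 ≤ 4 * (3/2:ℝ)^(s₁-3) := growth1 hs1
      _ = 4 * (3/2:ℝ)^(s₁-3) := rfl
  have hu2 : ((s₁+1)*(s₁+2)) * ((3/2:ℝ)^(s₁-3))⁻¹ ≤ 20.3 := by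
    rw [mul_inv_le_iff₀ hR0]
    calc (s₁+1)*(s₁+2) ≤ 20.3 * (3/2:ℝ)^(s₁-3) := growth2 hs1
      _ = 20.3 * (3/2:ℝ)^(s₁-3) := rfl
  have hBern : 1 + s₁ * τ ≤ (1 + τ) ^ s₁ :=
    one_add_mul_self_le_rpow_one_add (by linarith) (by linarith)
  have hP1 : (0:ℝ) < 1 + s₁*τ := by nlinarith
  have hB : (((1+τ):ℝ)^s₁)⁻¹ ≤ (1 + s₁*τ)⁻¹ := by
    apply inv_anti₀ hP1
    exact hBern
  have hB0 : (0:ℝ) ≤ (((1+τ):ℝ)^s₁)⁻¹ :=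
    (inv_pos.mpr (Real.rpow_pos_of_pos ht1 _)).le
  have hfn := final_numeric hτ0 hτ hs1 (neg_log_one_sub_ge hτ0 hτ)
    (tsum_nonneg betaLn_nonneg) tsum_betaLn_le hE3 hu1 hu2 hB0 hB
  -- assemble : Cσ * Sβ < Pdiff
  have hc1 : Cσ * ∑' k, betaLn k
      = (1 - (1-τ)^(s₂-s₁)) * ((1-τ)^s₁
        * (τ^2*(s₁*(s₁+1))*(((3/2:ℝ)^(s₁-3))⁻¹)*(∑' k, betaLn k) / (-Real.log (1-τ)))) := by
    rw [hCσ]; ring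
  have hlt2 : (1-τ)^s₁
        * (τ^2*(s₁*(s₁+1))*(((3/2:ℝ)^(s₁-3))⁻¹)*(∑' k, betaLn k) / (-Real.log (1-τ)))
      < (1-τ)^s₁ * (2*(1 - (((1+τ):ℝ)^s₁)⁻¹)) := by
    exact mul_lt_mul_of_pos_left hfn hQ0
  have hlt3 : Cσ * ∑' k, betaLn k
      < 2*(1 - (1-τ)^(s₂-s₁)) * (1-τ)^s₁ * (1 - (((1+τ):ℝ)^s₁)⁻¹) := by
    rw [hc1]
    have := mul_lt_mul_of_pos_left hlt2 hG0
    calc (1 - (1-τ)^(s₂-s₁)) * ((1-τ)^s₁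
        * (τ^2*(s₁*(s₁+1))*(((3/2:ℝ)^(s₁-3))⁻¹)*(∑' k, betaLn k) / (-Real.log (1-τ))))
        < (1 - (1-τ)^(s₂-s₁)) * ((1-τ)^s₁ * (2*(1 - (((1+τ):ℝ)^s₁)⁻¹))) := this
      _ = 2*(1 - (1-τ)^(s₂-s₁)) * (1-τ)^s₁ * (1 - (((1+τ):ℝ)^s₁)⁻¹) := by ring
  have hP := P_diff_lower hτ0 hτ hs1 hlt
  rw [lamH_eq hτ0 hτ hs2, lamH_eq hτ0 hτ hs1]
  linarith [hsub, hbound, hlt3, hP]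

/-- For `0 < τ ≤ 1/2`, the function `Λ_τ` is positive and strictly decreasing on `[3,∞)`
and tends to `0` at `+∞`. -/
theorem LamH_pos_strictAnti_tendsto_zero (τ : ℝ) (hτ0 : 0 < τ) (hτ : τ ≤ 1 / 2) :
    (∀ s : ℝ, 3 ≤ s → 0 < LamH τ s) ∧
    (∀ s₁ s₂ : ℝ, 3 ≤ s₁ → s₁ < s₂ → LamH τ s₂ < LamH τ s₁) ∧
    Tendsto (fun s : ℝ => LamH τ s) atTop (nhds 0) := by
  refine ⟨fun s hs => lamH_pos hτ0 (by linarith) hs,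
    fun s₁ s₂ h1 h2 => lamH_strict hτ0 (by linarith) h1 h2,
    lamH_tendsto hτ0 (by linarith)⟩
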